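/- In the setting of harmonic-type extensions: let V, Λ, T, R, V⁰ be as before, and for ν ∈ Λ let B(ν) : V → V* be symmetric, coercive with constant c > 0, and suppose ν ↦ B(ν) is Lipschitz (via composition with a Lipschitz solution map F) on a bounded set U ⊂ Λ, and F'(ν) ∈ B(Λ, V) solves ⟨B(ν)F'(ν)η, v⟩ = 0 for v ∈ V⁰, T F'(ν)η = η. Then ν ↦ F'(ν) is Lipschitz continuous from U to B(Λ, V): ‖F'(ν)η − F'(λ)η‖_V ≤ (C/c)‖ν − λ‖_Λ ‖η‖_Λ for ν, λ ∈ U, η ∈ Λ. -/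

import Mathlib

/-- Lipschitz continuity of `ν ↦ F'(ν)`: if `B(ν)` is coercive with constant `c`, `F'`
is bounded by `C₁` on `U`, and `ν ↦ B(ν)` is Lipschitz with constant `C₂` on `U`, then
`‖F'(ν)η − F'(λ)η‖ ≤ (C₂C₁/c)‖ν − λ‖‖η‖` for `ν, λ ∈ U`. -/
theorem stmt_16 {V Λ : Type*}
    [NormedAddCommGroup V] [InnerProductSpace ℝ V] [CompleteSpace V]
    [NormedAddCommGroup Λ] [InnerProductSpace ℝ Λ] [CompleteSpace Λ]
    (T : V →L[ℝ] Λ) (R : Λ →L[ℝ] V) (hTR : ∀ η : Λ, T (R η) = η)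
    (U : Set Λ) (hU : Bornology.IsBounded U)
    (B : Λ → V →L[ℝ] StrongDual ℝ V) (c C₁ C₂ : ℝ)
    (hc : 0 < c) (hC₁ : 0 < C₁) (hC₂ : 0 < C₂)
    (hsym : ∀ ν ∈ U, ∀ u v : V, B ν u v = B ν v u)
    (hcoer : ∀ ν ∈ U, ∀ u : V, c * ‖u‖ ^ 2 ≤ B ν u u)
    (hBlip : ∀ ν ∈ U, ∀ lam ∈ U, ∀ u : V, ‖B lam u - B ν u‖ ≤ C₂ * ‖lam - ν‖ * ‖u‖)
    (F' : Λ → Λ →L[ℝ] V)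
    (hFbdd : ∀ ν ∈ U, ∀ η : Λ, ‖F' ν η‖ ≤ C₁ * ‖η‖)
    (htrace : ∀ ν ∈ U, ∀ η : Λ, T (F' ν η) = η)
    (hharm : ∀ ν ∈ U, ∀ η : Λ, ∀ v : V, T v = 0 → B ν (F' ν η) v = 0) :
    ∀ ν ∈ U, ∀ lam ∈ U, ∀ η : Λ,
      ‖F' ν η - F' lam η‖ ≤ (C₂ * C₁ / c) * ‖ν - lam‖ * ‖η‖ := by
  intro ν hν lam hlam η
  set w : V := F' ν η - F' lam η with hw
  have hTw : T w = 0 := by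
    simp [hw, htrace ν hν η, htrace lam hlam η]
  by_cases hw0 : w = 0
  · rw [hw0]
    simp only [norm_zero]
    positivity
  · have hwpos : (0:ℝ) < ‖w‖ := norm_pos_iff.mpr hw0
    have h1 : B ν (F' ν η) w = 0 := hharm ν hν η w hTw
    have h2 : B lam (F' lam η) w = 0 := hharm lam hlam η w hTw
    have key : B ν w w = (B lam (F' lam η) - B ν (F' lam η)) w := by
      have : B ν w = B ν (F' ν η) - B ν (F' lam η) := by
        rw [hw]; exact map_sub (B ν) _ _
      rw [this]
      simp [h1, h2]
    have hb : B ν w w ≤ C₂ * ‖lam - ν‖ * ‖F' lam η‖ * ‖w‖ := by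
      rw [key]
      calc (B lam (F' lam η) - B ν (F' lam η)) w
          ≤ ‖B lam (F' lam η) - B ν (F' lam η)‖ * ‖w‖ := by
            exact (le_abs_self _).trans ((B lam (F' lam η) - B ν (F' lam η)).le_opNorm w)
        _ ≤ C₂ * ‖lam - ν‖ * ‖F' lam η‖ * ‖w‖ := by
            apply mul_le_mul_of_nonneg_right (hBlip ν hν lam hlam _) (norm_nonneg _)
    have hcoerw : c * ‖w‖ ^ 2 ≤ B ν w w := hcoer ν hν w
    have hF : ‖F' lam η‖ ≤ C₁ * ‖η‖ := hFbdd lam hlam η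
    have hchain : c * ‖w‖ * ‖w‖ ≤ C₂ * ‖ν - lam‖ * (C₁ * ‖η‖) * ‖w‖ := by
      have : c * ‖w‖ ^ 2 ≤ C₂ * ‖lam - ν‖ * ‖F' lam η‖ * ‖w‖ := hcoerw.trans hb
      rw [norm_sub_rev ν lam]
      calc c * ‖w‖ * ‖w‖ = c * ‖w‖ ^ 2 := by ring
        _ ≤ C₂ * ‖lam - ν‖ * ‖F' lam η‖ * ‖w‖ := this
        _ ≤ C₂ * ‖lam - ν‖ * (C₁ * ‖η‖) * ‖w‖ := by
            apply mul_le_mul_of_nonneg_right _ (norm_nonneg _)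
            apply mul_le_mul_of_nonneg_left hF
            positivity
    have := le_of_mul_le_mul_right (by linarith [hchain] : c * ‖w‖ * ‖w‖ ≤ (C₂ * ‖ν - lam‖ * (C₁ * ‖η‖)) * ‖w‖) hwpos
    calc ‖w‖ = (c * ‖w‖) / c := by field_simp
      _ ≤ (C₂ * ‖ν - lam‖ * (C₁ * ‖η‖)) / c := by
          gcongr
      _ = (C₂ * C₁ / c) * ‖ν - lam‖ * ‖η‖ := by ring
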